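/- If R is a perfect ring of characteristic p and S is an étale R-algebra, then S is perfect of characteristic p. -/

import Mathlib

set_option synthInstance.maxHeartbeats 1000000
set_option maxHeartbeats 1000000

universe u
open TensorProduct


lemma aux_charP {p : ℕ} (hp : p.Prime) (A : Type u) [CommRing A] [Nontrivial A]
    (h : (p : A) = 0) : CharP A p := by
  obtain ⟨q, hq⟩ := CharP.exists A
  have hdvd : q ∣ p := (CharP.cast_eq_zero_iff A q p).mp h
  rcases hp.eq_one_or_self_of_dvd q hdvd with h1 | h1
  · subst h1
    have h2 : ((1 : ℕ) : A) = 0 := CharP.cast_eq_zero A 1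
    rw [Nat.cast_one] at h2
    exact absurd h2 one_ne_zero
  · subst h1; exact hq

lemma aux_fs_self (R : Type u) [CommRing R] : Algebra.FormallySmooth R R :=
  Algebra.FormallySmooth.of_equiv (MvPolynomial.isEmptyAlgEquiv R (PEmpty.{u+1}))

lemma aux_twist_smooth (R S : Type u) [CommRing R] [CommRing S] [inst : Algebra R S]
    [Algebra.FormallySmooth R S] (e : R ≃+* R) :
    @Algebra.FormallySmooth R S _ _ ((algebraMap R S).comp e.toRingHom).toAlgebra := by
  letI iA : Algebra R R := e.toRingHom.toAlgebra
  letI iB : Algebra R S := ((algebraMap R S).comp e.toRingHom).toAlgebra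
  haveI tow : @IsScalarTower R R S iA.toSMul inst.toSMul iB.toSMul :=
    @IsScalarTower.of_algebraMap_eq R R S _ _ _ iA inst iB (fun r => rfl)
  haveI hA : @Algebra.FormallySmooth R R _ _ iA :=
    @Algebra.FormallySmooth.of_equiv R _ R R _ (Algebra.id R) _ iA (aux_fs_self R)
      (@AlgEquiv.ofRingEquiv R R R _ _ _ (Algebra.id R) iA e (fun x => rfl))
  exact @Algebra.FormallySmooth.comp R _ R _ iA S _ iB inst tow hA inferInstance

lemma aux_twist_fp (R S : Type u) [CommRing R] [CommRing S] [inst : Algebra R S]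
    [Algebra.FinitePresentation R S] (e : R ≃+* R) :
    @Algebra.FinitePresentation R S _ _ ((algebraMap R S).comp e.toRingHom).toAlgebra := by
  letI iA : Algebra R R := e.toRingHom.toAlgebra
  letI iB : Algebra R S := ((algebraMap R S).comp e.toRingHom).toAlgebra
  haveI tow : @IsScalarTower R R S iA.toSMul inst.toSMul iB.toSMul :=
    @IsScalarTower.of_algebraMap_eq R R S _ _ _ iA inst iB (fun r => rfl)
  haveI hA : @Algebra.FinitePresentation R R _ _ iA :=
    @Algebra.FinitePresentation.equiv R R R _ _ (Algebra.id R) _ iA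
      (Algebra.FinitePresentation.self R)
      (@AlgEquiv.ofRingEquiv R R R _ _ _ (Algebra.id R) iA e (fun x => rfl))
  exact @Algebra.FinitePresentation.trans R R S _ _ iA _ iB inst tow hA inferInstance

lemma aux_frob_surj {p : ℕ} (hp : p.Prime) (R S : Type u) [CommRing R] [CommRing S]
    [Algebra R S] [CharP R p] [CharP S p] (hF : Function.Surjective fun x : R => x ^ p)
    [Algebra.FormallyUnramified R S] [Algebra.FiniteType R S] [Nontrivial S] :
    Function.Surjective fun x : S => x ^ p := by
  haveI : Fact p.Prime := ⟨hp⟩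
  haveI : ExpChar S p := ExpChar.prime hp
  -- the subalgebra of p-th powers
  let T : Subalgebra R S :=
  { carrier := Set.range (fun x : S => x ^ p)
    mul_mem' := by rintro a b ⟨x, rfl⟩ ⟨y, rfl⟩; exact ⟨x * y, mul_pow x y p⟩
    one_mem' := ⟨1, one_pow p⟩
    add_mem' := by rintro a b ⟨x, rfl⟩ ⟨y, rfl⟩; exact ⟨x + y, add_pow_char x y p⟩
    zero_mem' := ⟨0, zero_pow hp.ne_zero⟩
    algebraMap_mem' := fun r => by
      obtain ⟨u, hu⟩ := hF r
      refine ⟨algebraMap R S u, ?_⟩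
      show (algebraMap R S u) ^ p = _
      rw [← map_pow]
      exact congrArg _ hu }
  have hTmem : ∀ s : S, s ^ p ∈ T := fun s => ⟨s, rfl⟩
  haveI : Algebra.IsIntegral T S := by
    constructor
    intro s
    refine ⟨Polynomial.X ^ p - Polynomial.C (⟨s ^ p, hTmem s⟩ : T),
      Polynomial.monic_X_pow_sub_C _ hp.ne_zero, ?_⟩
    simp only [Polynomial.eval₂_sub, Polynomial.eval₂_pow, Polynomial.eval₂_X, Polynomial.eval₂_C]
    show s ^ p - ((⟨s ^ p, hTmem s⟩ : T) : S) = 0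
    simp
  haveI : Algebra.FiniteType T S := Algebra.FiniteType.of_restrictScalars_finiteType R T S
  haveI : Module.Finite T S := Algebra.IsIntegral.finite
  -- the tensor product over T
  have hone : Function.Injective (algebraMap T S) := Subtype.val_injective
  haveI : Nontrivial (S ⊗[T] S) := by
    exact (Algebra.TensorProduct.lmul' T (S := S)).toRingHom.domain_nontrivial
  haveI : CharP (S ⊗[T] S) p := by
    apply aux_charP hp
    have h1 : ((p : ℕ) : T) = 0 := by
      apply Subtype.val_injective
      push_cast
      exact CharP.cast_eq_zero S p
    calc ((p : ℕ) : S ⊗[T] S) = algebraMap T _ ((p:ℕ):T) := by rw [map_natCast]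
    _ = 0 := by rw [h1, map_zero]
  haveI : ExpChar (S ⊗[T] S) p := ExpChar.prime hp
  -- finite generating set
  obtain ⟨G, hG⟩ := (inferInstance : Algebra.FiniteType R S).out
  have hGT : Algebra.adjoin T (G : Set S) = ⊤ := by
    rw [eq_top_iff]
    intro x _
    have hx : x ∈ Algebra.adjoin R (G : Set S) := hG ▸ trivial
    have hle : Algebra.adjoin R (G : Set S) ≤
        (Algebra.adjoin T (G : Set S)).restrictScalars R :=
      Algebra.adjoin_le fun g hg => Algebra.subset_adjoin hg
    exact hle hx
  set J : Ideal (S ⊗[T] S) :=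
    Ideal.span ((fun s : S => (1 : S) ⊗ₜ[T] s - s ⊗ₜ[T] (1 : S)) '' (G : Set S)) with hJ
  -- all diagonal differences lie in J
  have hmemJ : ∀ s : S, (1 : S) ⊗ₜ[T] s - s ⊗ₜ[T] (1 : S) ∈ J := by
    intro s
    have hs : s ∈ Algebra.adjoin T (G : Set S) := hGT ▸ trivial
    induction hs using Algebra.adjoin_induction with
    | mem g hg => exact Ideal.subset_span ⟨g, hg, rfl⟩
    | algebraMap t =>
        have : (1 : S) ⊗ₜ[T] (algebraMap T S t) - (algebraMap T S t) ⊗ₜ[T] (1 : S) = 0 := by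
          rw [Algebra.algebraMap_eq_smul_one, TensorProduct.tmul_smul,
            TensorProduct.smul_tmul', sub_self]
        rw [this]; exact J.zero_mem
    | add x y hx hy ihx ihy =>
        have : (1 : S) ⊗ₜ[T] (x + y) - (x + y) ⊗ₜ[T] (1 : S) =
            ((1 : S) ⊗ₜ[T] x - x ⊗ₜ[T] (1 : S)) + ((1 : S) ⊗ₜ[T] y - y ⊗ₜ[T] (1 : S)) := by
          rw [TensorProduct.tmul_add, TensorProduct.add_tmul]; ring
        rw [this]; exact J.add_mem ihx ihy
    | mul x y hx hy ihx ihy =>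
        have : (1 : S) ⊗ₜ[T] (x * y) - (x * y) ⊗ₜ[T] (1 : S) =
            ((1 : S) ⊗ₜ[T] x) * ((1 : S) ⊗ₜ[T] y - y ⊗ₜ[T] (1 : S)) +
              (y ⊗ₜ[T] (1 : S)) * ((1 : S) ⊗ₜ[T] x - x ⊗ₜ[T] (1 : S)) := by
          simp only [mul_sub, Algebra.TensorProduct.tmul_mul_tmul, one_mul, mul_one]
          ring
        rw [this]
        exact J.add_mem (J.mul_mem_left _ ihy) (J.mul_mem_left _ ihx)
  -- the kernel of multiplication is contained in J
  have hker : RingHom.ker (Algebra.TensorProduct.lmul' T (S := S)).toRingHom ≤ J := by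
    have := KaehlerDifferential.span_range_eq_ideal T S
    rw [show KaehlerDifferential.ideal T S =
      RingHom.ker (Algebra.TensorProduct.lmul' T (S := S)).toRingHom from rfl] at this
    rw [← this, Ideal.span_le]
    rintro _ ⟨s, rfl⟩
    exact hmemJ s
  -- J is nilpotent
  have hJfg : J.FG := Submodule.fg_span ((G.finite_toSet).image _)
  have hJrad : J ≤ Ideal.radical ⊥ := by
    rw [hJ, Ideal.span_le]
    rintro _ ⟨s, hs, rfl⟩
    refine ⟨p, ?_⟩
    have hcomm : Commute ((1 : S) ⊗ₜ[T] s) (s ⊗ₜ[T] (1 : S)) := Commute.all _ _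
    rw [sub_pow_expChar]
    have h1 : ((1 : S) ⊗ₜ[T] s) ^ p = (1 : S) ⊗ₜ[T] (s ^ p) := by
      rw [Algebra.TensorProduct.tmul_pow, one_pow]
    have h2 : (s ⊗ₜ[T] (1 : S)) ^ p = (s ^ p) ⊗ₜ[T] (1 : S) := by
      rw [Algebra.TensorProduct.tmul_pow, one_pow]
    rw [h1, h2]
    have h3 : (s ^ p : S) = algebraMap T S ⟨s ^ p, hTmem s⟩ := rfl
    rw [h3, Algebra.algebraMap_eq_smul_one, TensorProduct.tmul_smul,
      TensorProduct.smul_tmul', sub_self]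
    exact Ideal.zero_mem ⊥
  obtain ⟨n, hn⟩ := Ideal.exists_pow_le_of_le_radical_of_fg hJrad hJfg
  have hkernil : IsNilpotent (RingHom.ker (Algebra.TensorProduct.lmul' T (S := S)).toRingHom) := by
    refine ⟨n, ?_⟩
    rw [Ideal.zero_eq_bot, eq_bot_iff]
    calc RingHom.ker (Algebra.TensorProduct.lmul' T (S := S)).toRingHom ^ n ≤ J ^ n :=
          Ideal.pow_right_mono hker n
    _ ≤ ⊥ := hn
  -- apply unramifiedness
  have hdiag : ∀ s : S, s ⊗ₜ[T] (1 : S) = (1 : S) ⊗ₜ[T] s := by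
    have hext := Algebra.FormallyUnramified.ext' (R := R) (A := S)
      (Algebra.TensorProduct.lmul' T (S := S)).toRingHom hkernil
      (Algebra.TensorProduct.includeLeft)
      ((Algebra.TensorProduct.includeRight).restrictScalars R)
      (fun x => by simp)
    intro s
    exact AlgHom.congr_fun hext s
  -- conclude surjectivity
  have hsurjT : Function.Surjective (algebraMap T S) :=
    Algebra.isEpi_iff_surjective_algebraMap_of_finite.mp
      ((Algebra.isEpi_iff_forall_one_tmul_eq T S).mpr fun s => (hdiag s).symm)
  intro s
  obtain ⟨t, ht⟩ := hsurjT s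
  obtain ⟨y, hy⟩ := t.2
  exact ⟨y, hy.trans ht⟩

lemma aux_frob_inj {p : ℕ} (hp : p.Prime) (R S : Type u) [CommRing R] [CommRing S]
    [Algebra R S] [CharP R p] [CharP S p] (hF : Function.Bijective fun x : R => x ^ p)
    [Algebra.Etale R S] (hsurj : Function.Surjective fun x : S => x ^ p) :
    Function.Injective fun x : S => x ^ p := by
  haveI : Fact p.Prime := ⟨hp⟩
  haveI : ExpChar S p := ExpChar.prime hp
  haveI : ExpChar R p := ExpChar.prime hp
  -- the Frobenius ring homs
  set φ : S →+* S := frobenius S p with hφ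
  have hφdef : ∀ x : S, φ x = x ^ p := fun x => frobenius_def p x
  have hφsurj : Function.Surjective φ := by
    intro s; obtain ⟨y, hy⟩ := hsurj s; exact ⟨y, by rw [hφdef]; exact hy⟩
  set I : Ideal S := RingHom.ker φ with hI
  -- the twisted algebra structure
  have hfrobR : ⇑(frobenius R p) = fun x : R => x ^ p := funext fun x => frobenius_def p x
  set eR : R ≃+* R := RingEquiv.ofBijective (frobenius R p) (hfrobR ▸ hF) with heR
  have hFSt : @Algebra.FormallySmooth R S _ _ ((algebraMap R S).comp eR.toRingHom).toAlgebra :=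
    aux_twist_smooth R S eR
  have hFPt : @Algebra.FinitePresentation R S _ _
      ((algebraMap R S).comp eR.toRingHom).toAlgebra := aux_twist_fp R S eR
  -- S ⧸ I is isomorphic, as an R-algebra, to the twisted S
  have hri : Function.RightInverse (Function.surjInv hφsurj) φ :=
    Function.rightInverse_surjInv hφsurj
  let ψ₀ : S ⧸ I ≃+* S := RingHom.quotientKerEquivOfRightInverse hri
  have hψ₀ : ∀ x : S, ψ₀ (Ideal.Quotient.mk I x) = φ x := by
    intro x
    rw [RingHom.quotientKerEquivOfRightInverse.apply]
    exact RingHom.kerLift_mk φ x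
  let ψ := @AlgEquiv.ofRingEquiv R (S ⧸ I) S _ _ _ _
      ((algebraMap R S).comp eR.toRingHom).toAlgebra ψ₀ (by
    intro r
    have h0 : @algebraMap R (S ⧸ I) _ _ _ r = Ideal.Quotient.mk I (algebraMap R S r) := rfl
    have h1 : @algebraMap R S _ _ ((algebraMap R S).comp eR.toRingHom).toAlgebra r =
        algebraMap R S (eR r) := rfl
    rw [h0, h1, hψ₀, hφdef, heR]
    show (algebraMap R S r) ^ p = algebraMap R S (frobenius R p r)
    rw [frobenius_def, map_pow])
  let ψs : @AlgEquiv R S (S ⧸ I) _ _ _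
      ((algebraMap R S).comp eR.toRingHom).toAlgebra _ :=
    @AlgEquiv.symm R (S ⧸ I) S _ _ _ _ ((algebraMap R S).comp eR.toRingHom).toAlgebra ψ
  haveI hFSQ : Algebra.FormallySmooth R (S ⧸ I) :=
    @Algebra.FormallySmooth.of_equiv R _ S (S ⧸ I) _
      ((algebraMap R S).comp eR.toRingHom).toAlgebra _ _ hFSt ψs
  haveI hFPQ : Algebra.FinitePresentation R (S ⧸ I) :=
    @Algebra.FinitePresentation.equiv R S (S ⧸ I) _ _
      ((algebraMap R S).comp eR.toRingHom).toAlgebra _ _ hFPt ψs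
  -- I is finitely generated
  have hIfg : I.FG := by
    have := Algebra.FinitePresentation.ker_fG_of_surjective (Ideal.Quotient.mkₐ R I)
      (Ideal.Quotient.mkₐ_surjective R I)
    rwa [show RingHom.ker (Ideal.Quotient.mkₐ R I).toRingHom = I from Ideal.mk_ker] at this
  -- I = I^2 via formal smoothness and unramifiedness
  have hI2 : I ≤ I ^ 2 := by
    set J' : Ideal (S ⧸ I ^ 2) := I.map (Ideal.Quotient.mk (I ^ 2)) with hJ'
    have hsq : J' ^ 2 = ⊥ := by
      rw [hJ', pow_two (Ideal.map (Ideal.Quotient.mk (I ^ 2)) I), ← Ideal.map_mul,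
        ← pow_two I, Ideal.map_quotient_self]
    have hnil : IsNilpotent J' := ⟨2, hsq⟩
    have hle : I ^ 2 ≤ I := Ideal.pow_le_self (by norm_num)
    let c := DoubleQuot.quotQuotEquivQuotOfLEₐ (R := R) (A := S) hle
    let g : (S ⧸ I) →ₐ[R] ((S ⧸ I ^ 2) ⧸ J') := c.symm.toAlgHom
    let σ : (S ⧸ I) →ₐ[R] (S ⧸ I ^ 2) := Algebra.FormallySmooth.lift J' hnil g
    have hext : Ideal.Quotient.mkₐ R (I ^ 2) = σ.comp (Ideal.Quotient.mkₐ R I) := by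
      refine Algebra.FormallyUnramified.ext (R := R) (A := S) (B := S ⧸ I ^ 2) (I := J')
        hnil ?_
      intro x
      have h1 : Ideal.Quotient.mk J' (σ (Ideal.Quotient.mk I x)) = g (Ideal.Quotient.mk I x) :=
        Algebra.FormallySmooth.mk_lift J' hnil g (Ideal.Quotient.mk I x)
      have h2 : g (Ideal.Quotient.mk I x) =
          Ideal.Quotient.mk J' (Ideal.Quotient.mk (I ^ 2) x) := by
        show c.symm (Ideal.Quotient.mk I x) = _
        have h3 : (DoubleQuot.quotQuotEquivQuotOfLE hle).symm (Ideal.Quotient.mk I x) =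
            DoubleQuot.quotQuotMk (I ^ 2) I x := DoubleQuot.quotQuotEquivQuotOfLE_symm_mk x hle
        exact h3
      simp only [AlgHom.coe_comp, Function.comp_apply, Ideal.Quotient.mkₐ_eq_mk]
      rw [h1, h2]
    intro x hx
    have hx0 : Ideal.Quotient.mk I x = 0 := (Ideal.Quotient.eq_zero_iff_mem).mpr hx
    have := AlgHom.congr_fun hext x
    simp only [AlgHom.coe_comp, Function.comp_apply, Ideal.Quotient.mkₐ_eq_mk] at this
    rw [hx0, map_zero] at this
    exact (Ideal.Quotient.eq_zero_iff_mem).mp this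
  -- I is nilpotent, hence zero
  have hIrad : I ≤ Ideal.radical ⊥ := by
    intro x hx
    exact ⟨p, by rw [← hφdef x]; exact hx⟩
  obtain ⟨n, hn⟩ := Ideal.exists_pow_le_of_le_radical_of_fg hIrad hIfg
  have hIbot : I = ⊥ := by
    have hpow : ∀ m : ℕ, I ≤ I ^ (m + 1) := by
      intro m
      induction m with
      | zero => rw [pow_one]
      | succ k ih =>
        calc I ≤ I ^ 2 := hI2
        _ = I * I := (pow_two I)
        _ ≤ I * I ^ (k + 1) := Ideal.mul_mono_right ih
        _ = I ^ (k + 2) := by ring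
    rw [eq_bot_iff]
    calc I ≤ I ^ (n + 1) := hpow n
    _ ≤ I ^ n := Ideal.pow_le_pow_right (by omega)
    _ ≤ ⊥ := hn
  intro a b hab
  have : (a - b) ^ p = 0 := by
    rw [sub_pow_expChar]
    show (fun x : S => x ^ p) a - (fun x : S => x ^ p) b = 0
    rw [hab, sub_self]
  have : a - b ∈ I := by rw [hI, RingHom.mem_ker, hφdef]; exact this
  rw [hIbot] at this
  exact sub_eq_zero.mp this


/-- If `R` is a perfect ring of characteristic `p` and `S` is an
étale `R`-algebra, then `S` is perfect of characteristic `p`. -/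
theorem stmt_1 {p : ℕ} (hp : p.Prime) (R S : Type u) [CommRing R] [CommRing S] [Algebra R S]
    [CharP R p] (hF : Function.Bijective fun x : R => x ^ p)
    [Algebra.Etale R S] :
    (p : S) = 0 ∧ Function.Bijective fun x : S => x ^ p := by
  rcases subsingleton_or_nontrivial S with hS | hS
  · exact ⟨Subsingleton.elim _ _,
      ⟨fun a b _ => Subsingleton.elim a b, fun b => ⟨b, Subsingleton.elim _ _⟩⟩⟩
  · have hp0 : (p : S) = 0 := by
      have h1 : ((p : ℕ) : S) = algebraMap R S ((p : ℕ) : R) := (map_natCast _ p).symm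
      rw [h1, CharP.cast_eq_zero R p, map_zero]
    haveI : CharP S p := aux_charP hp S hp0
    have hsurj : Function.Surjective fun x : S => x ^ p :=
      aux_frob_surj hp R S hF.surjective
    exact ⟨hp0, ⟨aux_frob_inj hp R S hF hsurj, hsurj⟩⟩
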